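/- Let ρ > 0, M > 0 and t ∈ (0,1], and let W : ℝ^n → ℝ^n be a Hölder continuous vector field of exponent t, supported in the ball B_ρ of radius ρ about the origin, with sup norm plus Hölder-t seminorm at most M. Then there is a constant C > 0, depending only on n, ρ, t and M, such that for all μ₁, μ₂ ∈ ℂ^n, each of whose real and imaginary parts are orthogonal unit vectors in ℝ^n, one has sup_{x ∈ B_ρ} |N_{μ₁}^{-1}(−μ₁·W)(x) − N_{μ₂}^{-1}(−μ₂·W)(x)| ≤ C |μ₁ − μ₂|^t. -/

import Mathlib

open MeasureTheory Complex Real Set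
open scoped BigOperators

noncomputable section

/-- `ℝ^n` with the Euclidean norm. -/
abbrev Euc (n : ℕ) : Type := EuclideanSpace ℝ (Fin n)

/-- The vector of real parts of `μ ∈ ℂⁿ`. -/
noncomputable def reV {n : ℕ} (μ : EuclideanSpace ℂ (Fin n)) : Euc n := WithLp.toLp 2 (fun j => (μ j).re)

/-- The vector of imaginary parts of `μ ∈ ℂⁿ`. -/
noncomputable def imV {n : ℕ} (μ : EuclideanSpace ℂ (Fin n)) : Euc n := WithLp.toLp 2 (fun j => (μ j).im)

/-- The Cauchy-transform inverse `N_μ⁻¹` of the transport operator `μ·∇`. -/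
noncomputable def Nmuinv {n : ℕ} (μ : EuclideanSpace ℂ (Fin n)) (f : Euc n → ℂ) : Euc n → ℂ :=
  fun x => (1 / (2 * (π : ℂ))) *
    ∫ y : ℝ × ℝ, f (x - y.1 • reV μ - y.2 • imV μ) / ((y.1 : ℂ) + (y.2 : ℂ) * Complex.I)

/-- `μ` has orthonormal real and imaginary parts. -/
def GoodMu {n : ℕ} (μ : EuclideanSpace ℂ (Fin n)) : Prop :=
  ‖reV μ‖ = 1 ∧ ‖imV μ‖ = 1 ∧ (inner ℝ (reV μ) (imV μ) : ℝ) = 0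

/-- The function `x ↦ μ · W(x) = Σ_j μ_j W_j(x)`. -/
noncomputable def muDotW {n : ℕ} (μ : EuclideanSpace ℂ (Fin n)) (W : Euc n → Euc n) :
    Euc n → ℂ :=
  fun x => ∑ j, μ j * ((W x j : ℝ) : ℂ)

/-- `W` is Hölder continuous of exponent `t`, with sup norm plus Hölder seminorm at most `M`. -/
def HolderBdd {n : ℕ} (t M : ℝ) (W : Euc n → Euc n) : Prop :=
  ∃ a b : ℝ, 0 ≤ a ∧ 0 ≤ b ∧ a + b ≤ M ∧ (∀ x, ‖W x‖ ≤ a) ∧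
    ∀ x y, ‖W x - W y‖ ≤ b * ‖x - y‖ ^ t


-- ===== auxiliary lemmas =====

section MyAux
variable {n : ℕ}

lemma complex_normsq (z : ℂ) : ‖z‖ ^ 2 = z.re ^ 2 + z.im ^ 2 := by
  rw [Complex.sq_norm, Complex.normSq_apply]; ring

lemma cs_bound (μ : EuclideanSpace ℂ (Fin n)) (v : Euc n) :
    ‖∑ j, μ j * ((v j : ℝ) : ℂ)‖ ≤ ‖μ‖ * ‖v‖ := by
  have h1 : ‖∑ j, μ j * ((v j : ℝ) : ℂ)‖ ≤ ∑ j, ‖μ j‖ * |v j| := by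
    refine (norm_sum_le _ _).trans ?_
    refine Finset.sum_le_sum fun j _ => ?_
    rw [norm_mul, Complex.norm_real, Real.norm_eq_abs]
  set A : EuclideanSpace ℝ (Fin n) := WithLp.toLp 2 (fun j => ‖μ j‖ : Fin n → ℝ) with hA
  set B : EuclideanSpace ℝ (Fin n) := WithLp.toLp 2 (fun j => |v j| : Fin n → ℝ) with hB
  have h2 : ∑ j, ‖μ j‖ * |v j| = (inner ℝ A B : ℝ) := by
    rw [PiLp.inner_apply]
    simp [A, B, RCLike.inner_apply, conj_trivial, mul_comm]
  have h3 : (inner ℝ A B : ℝ) ≤ ‖A‖ * ‖B‖ := real_inner_le_norm A B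
  have hAn : ‖A‖ = ‖μ‖ := by
    rw [EuclideanSpace.norm_eq, EuclideanSpace.norm_eq]
    congr 1
    refine Finset.sum_congr rfl fun j _ => ?_
    simp [A, Real.norm_eq_abs, abs_norm]
  have hBn : ‖B‖ = ‖v‖ := by
    rw [EuclideanSpace.norm_eq, EuclideanSpace.norm_eq]
    congr 1
    refine Finset.sum_congr rfl fun j _ => ?_
    simp [B, Real.norm_eq_abs, abs_abs]
  calc ‖∑ j, μ j * ((v j : ℝ) : ℂ)‖ ≤ ∑ j, ‖μ j‖ * |v j| := h1
    _ = (inner ℝ A B : ℝ) := h2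
    _ ≤ ‖A‖ * ‖B‖ := h3
    _ = ‖μ‖ * ‖v‖ := by rw [hAn, hBn]

lemma norm_reV_le (ν : EuclideanSpace ℂ (Fin n)) : ‖reV ν‖ ≤ ‖ν‖ := by
  rw [EuclideanSpace.norm_eq, EuclideanSpace.norm_eq]
  apply Real.sqrt_le_sqrt
  refine Finset.sum_le_sum fun j _ => ?_
  have : ‖(reV ν) j‖ = |(ν j).re| := by simp [reV]
  rw [this, _root_.sq_abs]
  rw [complex_normsq (ν j)]
  nlinarith [sq_nonneg (ν j).im]

lemma norm_imV_le (ν : EuclideanSpace ℂ (Fin n)) : ‖imV ν‖ ≤ ‖ν‖ := by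
  rw [EuclideanSpace.norm_eq, EuclideanSpace.norm_eq]
  apply Real.sqrt_le_sqrt
  refine Finset.sum_le_sum fun j _ => ?_
  have : ‖(imV ν) j‖ = |(ν j).im| := by simp [imV]
  rw [this, _root_.sq_abs]
  rw [complex_normsq (ν j)]
  nlinarith [sq_nonneg (ν j).re]

lemma reV_sub (μ₁ μ₂ : EuclideanSpace ℂ (Fin n)) : reV (μ₁ - μ₂) = reV μ₁ - reV μ₂ := by
  ext j
  simp [reV, PiLp.sub_apply, Complex.sub_re]

lemma imV_sub (μ₁ μ₂ : EuclideanSpace ℂ (Fin n)) : imV (μ₁ - μ₂) = imV μ₁ - imV μ₂ := by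
  ext j
  simp [imV, PiLp.sub_apply, Complex.sub_im]

lemma goodMu_norm_le {μ : EuclideanSpace ℂ (Fin n)} (hμ : GoodMu μ) : ‖μ‖ ≤ 2 := by
  have h : ‖μ‖ ^ 2 = ‖reV μ‖ ^ 2 + ‖imV μ‖ ^ 2 := by
    rw [EuclideanSpace.norm_eq, Real.sq_sqrt (by positivity)]
    rw [EuclideanSpace.norm_eq, EuclideanSpace.norm_eq,
      Real.sq_sqrt (by positivity), Real.sq_sqrt (by positivity)]
    rw [← Finset.sum_add_distrib]
    refine Finset.sum_congr rfl fun j _ => ?_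
    simp only [reV, imV, PiLp.toLp_apply, Real.norm_eq_abs, _root_.sq_abs]
    rw [Complex.sq_norm, Complex.normSq_apply]; ring
  rw [hμ.1, hμ.2.1] at h
  nlinarith [norm_nonneg μ]

lemma plane_norm {μ : EuclideanSpace ℂ (Fin n)} (hμ : GoodMu μ) (s u : ℝ) :
    ‖s • reV μ + u • imV μ‖ = Real.sqrt (s ^ 2 + u ^ 2) := by
  have h := norm_add_sq_real (s • reV μ) (u • imV μ)
  rw [real_inner_smul_left, real_inner_smul_right, hμ.2.2, norm_smul, norm_smul,
    hμ.1, hμ.2.1] at h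
  have h2 : ‖s • reV μ + u • imV μ‖ ^ 2 = s ^ 2 + u ^ 2 := by
    rw [h]; simp [Real.norm_eq_abs, _root_.sq_abs]; try ring
  rw [← h2, Real.sqrt_sq (norm_nonneg _)]


end MyAux

-- continuity from Hölder bound
lemma cont_of_holder {E F : Type*} [NormedAddCommGroup E] [NormedAddCommGroup F]
    {W : E → F} {b t : ℝ} (ht : 0 < t)
    (h : ∀ x y, ‖W x - W y‖ ≤ b * ‖x - y‖ ^ t) : Continuous W := by
  rw [continuous_iff_continuousAt]
  intro x
  rw [ContinuousAt, tendsto_iff_dist_tendsto_zero]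
  have hb : ∀ z : E, dist (W z) (W x) ≤ b * ‖z - x‖ ^ t := by
    intro z; rw [dist_eq_norm]; exact h z x
  have hcont : Continuous (fun z : E => b * ‖z - x‖ ^ t) := by
    apply Continuous.mul continuous_const
    exact ((continuous_id.sub continuous_const).norm).rpow_const (fun z => Or.inr ht.le)
  have hlim : Filter.Tendsto (fun z : E => b * ‖z - x‖ ^ t) (nhds x) (nhds 0) := by
    have := hcont.tendsto x
    simpa [Real.zero_rpow ht.ne'] using this
  exact squeeze_zero (fun z => dist_nonneg) hb hlim

-- 1D integrability of |s|^(-1/2) on an interval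
lemma integrable_abs_rpow (R : ℝ) (hR : 0 < R) :
    IntegrableOn (fun s : ℝ => |s| ^ (-(1/2) : ℝ)) (Icc (-R) R) := by
  rw [integrableOn_Icc_iff_integrableOn_Ioc]
  have hpos : IntervalIntegrable (fun s : ℝ => |s| ^ (-(1/2) : ℝ)) volume 0 R := by
    rw [intervalIntegrable_iff_integrableOn_Ioc_of_le hR.le]
    have h0 : IntegrableOn (fun s : ℝ => s ^ (-(1/2) : ℝ)) (Ioc 0 R) := by
      rw [← intervalIntegrable_iff_integrableOn_Ioc_of_le hR.le]
      exact intervalIntegral.intervalIntegrable_rpow' (by norm_num)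
    exact h0.congr_fun (fun s hs => by rw [abs_of_pos hs.1]) measurableSet_Ioc
  have hneg : IntervalIntegrable (fun s : ℝ => |s| ^ (-(1/2) : ℝ)) volume (-R) 0 := by
    have := ((IntervalIntegrable.iff_comp_neg (by simp)).mp hpos.symm)
    simpa [abs_neg] using this
  have := (hneg.trans hpos)
  rwa [intervalIntegrable_iff_integrableOn_Ioc_of_le
    (by linarith : -R ≤ R)] at this

noncomputable def Gfun (R : ℝ) : ℝ → ℝ :=
  Set.indicator (Icc (-R) R) (fun s => |s| ^ (-(1/2) : ℝ))

noncomputable def phi (R : ℝ) : ℝ × ℝ → ℝ := fun y => Gfun R y.1 * Gfun R y.2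

lemma Gfun_nonneg (R : ℝ) (s : ℝ) : 0 ≤ Gfun R s := by
  unfold Gfun
  apply Set.indicator_nonneg
  intro z _
  positivity

lemma phi_nonneg (R : ℝ) (y : ℝ × ℝ) : 0 ≤ phi R y :=
  mul_nonneg (Gfun_nonneg R y.1) (Gfun_nonneg R y.2)

lemma integrable_Gfun (R : ℝ) (hR : 0 < R) : Integrable (Gfun R) := by
  unfold Gfun
  rw [integrable_indicator_iff measurableSet_Icc]
  exact integrable_abs_rpow R hR

lemma integrable_phi (R : ℝ) (hR : 0 < R) : Integrable (phi R) := by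
  unfold phi
  rw [Measure.volume_eq_prod]
  exact (integrable_Gfun R hR).mul_prod (integrable_Gfun R hR)

-- lower bound for phi
lemma phi_ge (R : ℝ) {y : ℝ × ℝ} (h1 : y.1 ≠ 0) (h2 : y.2 ≠ 0) (hy : ‖y‖ ≤ R) :
    ‖y‖⁻¹ ≤ phi R y := by
  have hn : ‖y‖ = max |y.1| |y.2| := by
    rw [Prod.norm_def, Real.norm_eq_abs, Real.norm_eq_abs]
  have ha1 : |y.1| ≤ R := le_trans (by rw [hn]; exact le_max_left _ _) hy
  have ha2 : |y.2| ≤ R := le_trans (by rw [hn]; exact le_max_right _ _) hy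
  have hm1 : y.1 ∈ Icc (-R) R := abs_le.mp ha1 |>.imp id id |> fun h => ⟨h.1, h.2⟩
  have hm2 : y.2 ∈ Icc (-R) R := abs_le.mp ha2 |>.imp id id |> fun h => ⟨h.1, h.2⟩
  have hphi : phi R y = (|y.1| * |y.2|) ^ (-(1/2) : ℝ) := by
    unfold phi Gfun
    rw [Set.indicator_of_mem hm1, Set.indicator_of_mem hm2,
      ← Real.mul_rpow (abs_nonneg _) (abs_nonneg _)]
  rw [hphi]
  have hprodpos : 0 < |y.1| * |y.2| :=
    mul_pos (abs_pos.mpr h1) (abs_pos.mpr h2)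
  have hsqrt : (|y.1| * |y.2|) ^ (-(1/2) : ℝ) = (Real.sqrt (|y.1| * |y.2|))⁻¹ := by
    rw [Real.rpow_neg hprodpos.le, Real.sqrt_eq_rpow]
  rw [hsqrt]
  have hle : Real.sqrt (|y.1| * |y.2|) ≤ ‖y‖ := by
    have : |y.1| * |y.2| ≤ ‖y‖ ^ 2 := by
      rw [hn]
      have l1 : |y.1| ≤ max |y.1| |y.2| := le_max_left _ _
      have l2 : |y.2| ≤ max |y.1| |y.2| := le_max_right _ _
      nlinarith [abs_nonneg y.1, abs_nonneg y.2]
    calc Real.sqrt (|y.1| * |y.2|) ≤ Real.sqrt (‖y‖ ^ 2) := Real.sqrt_le_sqrt this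
      _ = ‖y‖ := Real.sqrt_sq (norm_nonneg _)
  have hypos : 0 < ‖y‖ := by
    rw [hn]; exact lt_max_of_lt_left (abs_pos.mpr h1)
  have hsqpos : 0 < Real.sqrt (|y.1| * |y.2|) := Real.sqrt_pos.mpr hprodpos
  exact inv_anti₀ hsqpos hle

-- delta bound
lemma delta_le {δ t : ℝ} (hδ0 : 0 ≤ δ) (hδ4 : δ ≤ 4) (ht0 : 0 < t) (ht1 : t ≤ 1) :
    δ ≤ 4 * δ ^ t := by
  rcases eq_or_lt_of_le hδ0 with h | h
  · rw [← h, Real.zero_rpow ht0.ne']; norm_num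
  · have key : δ = δ ^ t * δ ^ (1 - t) := by
      rw [← Real.rpow_add h, add_sub_cancel, Real.rpow_one]
    have h1 : δ ^ (1 - t) ≤ 4 ^ (1 - t) :=
      Real.rpow_le_rpow hδ0 hδ4 (by linarith)
    have h2 : (4 : ℝ) ^ (1 - t) ≤ 4 ^ (1 : ℝ) :=
      Real.rpow_le_rpow_of_exponent_le (by norm_num) (by linarith)
    have h3 : δ ^ t ≥ 0 := Real.rpow_nonneg hδ0 t
    calc δ = δ ^ t * δ ^ (1 - t) := key
      _ ≤ δ ^ t * 4 := by
          apply mul_le_mul_of_nonneg_left _ h3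
          calc δ ^ (1-t) ≤ 4 ^ (1-t) := h1
            _ ≤ 4 ^ (1:ℝ) := h2
            _ = 4 := by norm_num [Real.rpow_one]
      _ = 4 * δ ^ t := mul_comm _ _

-- denominator lower bound
lemma den_ge (y : ℝ × ℝ) : ‖y‖ ≤ ‖(y.1 : ℂ) + (y.2 : ℂ) * Complex.I‖ := by
  rw [Complex.norm_add_mul_I]
  rw [Prod.norm_def, Real.norm_eq_abs, Real.norm_eq_abs]
  apply max_le
  · calc |y.1| = Real.sqrt (y.1 ^ 2) := (Real.sqrt_sq_eq_abs _).symm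
      _ ≤ Real.sqrt (y.1 ^ 2 + y.2 ^ 2) := Real.sqrt_le_sqrt (by nlinarith [sq_nonneg y.2])
  · calc |y.2| = Real.sqrt (y.2 ^ 2) := (Real.sqrt_sq_eq_abs _).symm
      _ ≤ Real.sqrt (y.1 ^ 2 + y.2 ^ 2) := Real.sqrt_le_sqrt (by nlinarith [sq_nonneg y.1])


lemma norm_le_sqrt_prod (y : ℝ × ℝ) : ‖y‖ ≤ Real.sqrt (y.1 ^ 2 + y.2 ^ 2) := by
  have h := den_ge y
  rwa [Complex.norm_add_mul_I] at h

-- ============ main-proof building blocks ============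
section Blocks
variable {n : ℕ} {ρ t M a b : ℝ} {W : Euc n → Euc n} {x : Euc n}

lemma muDotW_cont (hWc : Continuous W) (μ : EuclideanSpace ℂ (Fin n)) :
    Continuous (muDotW μ W) := by
  unfold muDotW
  apply continuous_finset_sum
  intro j _
  exact continuous_const.mul
    (Complex.continuous_ofReal.comp ((EuclideanSpace.proj j).continuous.comp hWc))

lemma g_meas (hWc : Continuous W) (μ : EuclideanSpace ℂ (Fin n)) :
    AEStronglyMeasurable
      (fun y : ℝ × ℝ =>
        -muDotW μ W (x - y.1 • reV μ - y.2 • imV μ) / ((y.1 : ℂ) + (y.2 : ℂ) * Complex.I))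
      volume := by
  apply Measurable.aestronglyMeasurable
  apply Measurable.div
  · apply Continuous.measurable
    apply Continuous.neg
    apply (muDotW_cont hWc μ).comp
    exact (continuous_const.sub (continuous_fst.smul continuous_const)).sub
      (continuous_snd.smul continuous_const)
  · apply Measurable.add
    · exact Complex.measurable_ofReal.comp measurable_fst
    · exact (Complex.measurable_ofReal.comp measurable_snd).mul measurable_const

lemma ae_fst_ne : ∀ᵐ y : ℝ × ℝ, y.1 ≠ 0 := by
  have h0 : volume ({(0:ℝ)} ×ˢ (univ : Set ℝ)) = 0 := by
    rw [Measure.volume_eq_prod, Measure.prod_prod]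
    simp
  have := measure_eq_zero_iff_ae_notMem.mp h0
  filter_upwards [this] with y hy
  intro h1
  exact hy ⟨h1, mem_univ _⟩

lemma ae_snd_ne : ∀ᵐ y : ℝ × ℝ, y.2 ≠ 0 := by
  have h0 : volume ((univ : Set ℝ) ×ˢ ({(0:ℝ)} : Set ℝ)) = 0 := by
    rw [Measure.volume_eq_prod, Measure.prod_prod]
    simp
  have := measure_eq_zero_iff_ae_notMem.mp h0
  filter_upwards [this] with y hy
  intro h1
  exact hy ⟨mem_univ _, h1⟩

lemma g_supp (hρ : 0 < ρ) (hWsupp : ∀ z, ρ < ‖z‖ → W z = 0)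
    {μ : EuclideanSpace ℂ (Fin n)} (hμ : GoodMu μ) (hx : ‖x‖ ≤ ρ)
    {y : ℝ × ℝ} (hy : 2 * ρ < ‖y‖) :
    muDotW μ W (x - y.1 • reV μ - y.2 • imV μ) = 0 := by
  have hplane : ‖y.1 • reV μ + y.2 • imV μ‖ = Real.sqrt (y.1 ^ 2 + y.2 ^ 2) :=
    plane_norm hμ y.1 y.2
  have hge : ‖y‖ ≤ ‖y.1 • reV μ + y.2 • imV μ‖ := by
    rw [hplane]; exact norm_le_sqrt_prod y
  have hz : ρ < ‖x - y.1 • reV μ - y.2 • imV μ‖ := by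
    have h1 : x - y.1 • reV μ - y.2 • imV μ = x - (y.1 • reV μ + y.2 • imV μ) := by
      rw [sub_sub]
    rw [h1, norm_sub_rev]
    have h2 : ‖y.1 • reV μ + y.2 • imV μ‖ - ‖x‖ ≤ ‖(y.1 • reV μ + y.2 • imV μ) - x‖ :=
      (norm_sub_norm_le _ _).trans (le_refl _)
    linarith
  have hW0 := hWsupp _ hz
  unfold muDotW
  rw [hW0]
  simp

lemma muDotW_norm_le (hb0 : 0 ≤ b) (haM : a + b ≤ M) (hWa : ∀ z, ‖W z‖ ≤ a)
    {μ : EuclideanSpace ℂ (Fin n)} (hμ : GoodMu μ) (z : Euc n) :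
    ‖muDotW μ W z‖ ≤ 2 * M := by
  unfold muDotW
  calc ‖∑ j, μ j * ((W z j : ℝ) : ℂ)‖ ≤ ‖μ‖ * ‖W z‖ := cs_bound μ (W z)
    _ ≤ 2 * M := by
        have h1 := goodMu_norm_le hμ
        have h2 := hWa z
        have h3 := norm_nonneg (W z)
        have h4 := norm_nonneg μ
        nlinarith

lemma g_norm_le (hρ : 0 < ρ) (hM : 0 < M) (hWsupp : ∀ z, ρ < ‖z‖ → W z = 0)
    (hb0 : 0 ≤ b) (haM : a + b ≤ M) (hWa : ∀ z, ‖W z‖ ≤ a)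
    {μ : EuclideanSpace ℂ (Fin n)} (hμ : GoodMu μ) (hx : ‖x‖ ≤ ρ)
    {y : ℝ × ℝ} (hy1 : y.1 ≠ 0) (hy2 : y.2 ≠ 0) :
    ‖-muDotW μ W (x - y.1 • reV μ - y.2 • imV μ) / ((y.1 : ℂ) + (y.2 : ℂ) * Complex.I)‖
      ≤ (2 * M) * phi (2 * ρ) y := by
  have hypos : 0 < ‖y‖ := by
    rw [norm_pos_iff]
    intro h
    exact hy1 (by rw [h]; rfl)
  by_cases hyR : ‖y‖ ≤ 2 * ρ
  · rw [norm_div, norm_neg]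
    calc ‖muDotW μ W (x - y.1 • reV μ - y.2 • imV μ)‖ / ‖(y.1 : ℂ) + (y.2 : ℂ) * Complex.I‖
        ≤ (2 * M) / ‖y‖ := by
          apply div_le_div₀ (by positivity) (muDotW_norm_le hb0 haM hWa hμ _) hypos (den_ge y)
      _ = (2 * M) * ‖y‖⁻¹ := by rw [div_eq_mul_inv]
      _ ≤ (2 * M) * phi (2 * ρ) y := by
          apply mul_le_mul_of_nonneg_left (phi_ge (2*ρ) hy1 hy2 hyR) (by positivity)
  · rw [g_supp hρ hWsupp hμ hx (not_le.mp hyR)]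
    simp only [neg_zero, zero_div, norm_zero]
    exact mul_nonneg (by positivity) (phi_nonneg _ _)

lemma g_int (hρ : 0 < ρ) (hM : 0 < M) (hWsupp : ∀ z, ρ < ‖z‖ → W z = 0)
    (hb0 : 0 ≤ b) (haM : a + b ≤ M) (hWa : ∀ z, ‖W z‖ ≤ a) (hWc : Continuous W)
    {μ : EuclideanSpace ℂ (Fin n)} (hμ : GoodMu μ) (hx : ‖x‖ ≤ ρ) :
    Integrable (fun y : ℝ × ℝ =>
      -muDotW μ W (x - y.1 • reV μ - y.2 • imV μ) / ((y.1 : ℂ) + (y.2 : ℂ) * Complex.I)) := by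
  apply Integrable.mono' ((integrable_phi (2*ρ) (by positivity)).const_mul (2*M))
    (g_meas hWc μ)
  filter_upwards [ae_fst_ne, ae_snd_ne] with y hy1 hy2
  exact g_norm_le hρ hM hWsupp hb0 haM hWa hμ hx hy1 hy2

lemma combine_ineq {M P Y D : ℝ} (hM : 0 < M) (hD : 0 ≤ D) (hYP : Y ≤ P) :
    4*M*D + 4*M*(Y*D) ≤ 4*M*(1+P)*D := by nlinarith [mul_nonneg (mul_nonneg hM.le hD) (sub_nonneg.mpr hYP)]

set_option maxHeartbeats 1000000 in
lemma g_diff_le (hρ : 0 < ρ) (ht0 : 0 < t) (ht1 : t ≤ 1) (hM : 0 < M)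
    (hWsupp : ∀ z, ρ < ‖z‖ → W z = 0)
    (ha0 : 0 ≤ a) (hb0 : 0 ≤ b) (haM : a + b ≤ M) (hWa : ∀ z, ‖W z‖ ≤ a)
    (hWb : ∀ z w, ‖W z - W w‖ ≤ b * ‖z - w‖ ^ t)
    {μ₁ μ₂ : EuclideanSpace ℂ (Fin n)} (hμ₁ : GoodMu μ₁) (hμ₂ : GoodMu μ₂) (hx : ‖x‖ ≤ ρ)
    {y : ℝ × ℝ} (hy1 : y.1 ≠ 0) (hy2 : y.2 ≠ 0) :
    ‖-muDotW μ₁ W (x - y.1 • reV μ₁ - y.2 • imV μ₁) / ((y.1 : ℂ) + (y.2 : ℂ) * Complex.I)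
      - -muDotW μ₂ W (x - y.1 • reV μ₂ - y.2 • imV μ₂) / ((y.1 : ℂ) + (y.2 : ℂ) * Complex.I)‖
      ≤ (4 * M * (1 + (1 + 2*ρ) ^ t) * ‖μ₁ - μ₂‖ ^ t) * phi (2 * ρ) y := by
  set δ : ℝ := ‖μ₁ - μ₂‖ with hδdef
  have hδ0 : 0 ≤ δ := norm_nonneg _
  have hδ4 : δ ≤ 4 := by
    have h1 := goodMu_norm_le hμ₁
    have h2 := goodMu_norm_le hμ₂
    have := norm_sub_le μ₁ μ₂
    linarith
  have hδt0 : 0 ≤ δ ^ t := Real.rpow_nonneg hδ0 t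
  have hPt : (0:ℝ) < (1 + 2*ρ) ^ t := Real.rpow_pos_of_pos (by linarith) t
  have hKδ0 : 0 ≤ 4 * M * (1 + (1 + 2*ρ) ^ t) * δ ^ t := by positivity
  have hypos : 0 < ‖y‖ := by
    rw [norm_pos_iff]
    intro h
    exact hy1 (by rw [h]; rfl)
  by_cases hyR : ‖y‖ ≤ 2 * ρ
  · set z₁ : Euc n := x - y.1 • reV μ₁ - y.2 • imV μ₁ with hz₁
    set z₂ : Euc n := x - y.1 • reV μ₂ - y.2 • imV μ₂ with hz₂
    rw [div_sub_div_same, norm_div]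
    -- term 1
    have ht1' : ‖muDotW μ₁ W z₁ - muDotW μ₂ W z₁‖ ≤ 4 * M * δ ^ t := by
      have heq : muDotW μ₁ W z₁ - muDotW μ₂ W z₁
          = ∑ j, (μ₁ - μ₂) j * ((W z₁ j : ℝ) : ℂ) := by
        unfold muDotW
        rw [← Finset.sum_sub_distrib]
        refine Finset.sum_congr rfl fun j _ => ?_
        have hc : (μ₁ - μ₂) j = μ₁ j - μ₂ j := by simp
        rw [hc, sub_mul]
      rw [heq]
      calc ‖∑ j, (μ₁ - μ₂) j * ((W z₁ j : ℝ) : ℂ)‖ ≤ ‖μ₁ - μ₂‖ * ‖W z₁‖ := cs_bound _ _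
        _ ≤ δ * M := by
            have := hWa z₁
            have := norm_nonneg (W z₁)
            nlinarith
        _ ≤ (4 * δ ^ t) * M := by
            have := delta_le hδ0 hδ4 ht0 ht1
            nlinarith
        _ = 4 * M * δ ^ t := by ring
    -- distance between the two base points
    have huu : ‖z₁ - z₂‖ ≤ 2 * ‖y‖ * δ := by
      have hz : z₁ - z₂ = y.1 • (reV μ₂ - reV μ₁) + y.2 • (imV μ₂ - imV μ₁) := by
        rw [hz₁, hz₂, smul_sub, smul_sub]
        abel
      have hre : ‖reV μ₂ - reV μ₁‖ ≤ δ := by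
        rw [← reV_sub]
        calc ‖reV (μ₂ - μ₁)‖ ≤ ‖μ₂ - μ₁‖ := norm_reV_le _
          _ = δ := norm_sub_rev _ _
      have him : ‖imV μ₂ - imV μ₁‖ ≤ δ := by
        rw [← imV_sub]
        calc ‖imV (μ₂ - μ₁)‖ ≤ ‖μ₂ - μ₁‖ := norm_imV_le _
          _ = δ := norm_sub_rev _ _
      have hf1 : |y.1| ≤ ‖y‖ := by
        rw [← Real.norm_eq_abs]; exact norm_fst_le y
      have hf2 : |y.2| ≤ ‖y‖ := by
        rw [← Real.norm_eq_abs]; exact norm_snd_le y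
      rw [hz]
      calc ‖y.1 • (reV μ₂ - reV μ₁) + y.2 • (imV μ₂ - imV μ₁)‖
          ≤ ‖y.1 • (reV μ₂ - reV μ₁)‖ + ‖y.2 • (imV μ₂ - imV μ₁)‖ := norm_add_le _ _
        _ = |y.1| * ‖reV μ₂ - reV μ₁‖ + |y.2| * ‖imV μ₂ - imV μ₁‖ := by
            rw [norm_smul, norm_smul, Real.norm_eq_abs, Real.norm_eq_abs]
        _ ≤ ‖y‖ * δ + ‖y‖ * δ := by
            apply add_le_add
            · exact mul_le_mul hf1 hre (norm_nonneg _) (norm_nonneg _)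
            · exact mul_le_mul hf2 him (norm_nonneg _) (norm_nonneg _)
        _ = 2 * ‖y‖ * δ := by ring
    -- term 2
    have ht2' : ‖muDotW μ₂ W z₁ - muDotW μ₂ W z₂‖ ≤ 4 * M * (‖y‖ ^ t * δ ^ t) := by
      have heq : muDotW μ₂ W z₁ - muDotW μ₂ W z₂
          = ∑ j, μ₂ j * (((W z₁ - W z₂) j : ℝ) : ℂ) := by
        unfold muDotW
        rw [← Finset.sum_sub_distrib]
        refine Finset.sum_congr rfl fun j _ => ?_
        have hc : (W z₁ - W z₂) j = W z₁ j - W z₂ j := by simp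
        rw [hc]
        push_cast
        ring
      rw [heq]
      have hWd := hWb z₁ z₂
      have hmun := goodMu_norm_le hμ₂
      have hrp : ‖z₁ - z₂‖ ^ t ≤ (2 * ‖y‖ * δ) ^ t :=
        Real.rpow_le_rpow (norm_nonneg _) huu ht0.le
      have hexp : (2 * ‖y‖ * δ) ^ t = 2 ^ t * (‖y‖ ^ t * δ ^ t) := by
        rw [Real.mul_rpow (by positivity) hδ0, Real.mul_rpow (by norm_num) (norm_nonneg _)]
        ring
      have h2t : (2:ℝ) ^ t ≤ 2 := by
        calc (2:ℝ) ^ t ≤ 2 ^ (1:ℝ) := Real.rpow_le_rpow_of_exponent_le (by norm_num) ht1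
          _ = 2 := Real.rpow_one 2
      have h2t0 : (0:ℝ) ≤ 2 ^ t := by positivity
      have hyt0 : (0:ℝ) ≤ ‖y‖ ^ t := Real.rpow_nonneg (norm_nonneg _) t
      calc ‖∑ j, μ₂ j * (((W z₁ - W z₂) j : ℝ) : ℂ)‖
          ≤ ‖μ₂‖ * ‖W z₁ - W z₂‖ := cs_bound _ _
        _ ≤ 2 * (b * ‖z₁ - z₂‖ ^ t) := by
            exact mul_le_mul hmun hWd (norm_nonneg _) (by norm_num)
        _ ≤ 2 * (b * (2 ^ t * (‖y‖ ^ t * δ ^ t))) := by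
            have := hrp
            rw [hexp] at this
            nlinarith
        _ ≤ 4 * M * (‖y‖ ^ t * δ ^ t) := by
            have hprod : 0 ≤ ‖y‖ ^ t * δ ^ t := mul_nonneg hyt0 hδt0
            have e1 : 2 ^ t * (‖y‖ ^ t * δ ^ t) ≤ 2 * (‖y‖ ^ t * δ ^ t) :=
              mul_le_mul_of_nonneg_right h2t hprod
            have e2 : b * (2 ^ t * (‖y‖ ^ t * δ ^ t)) ≤ b * (2 * (‖y‖ ^ t * δ ^ t)) :=
              mul_le_mul_of_nonneg_left e1 hb0
            have e3 : b * (2 * (‖y‖ ^ t * δ ^ t)) ≤ M * (2 * (‖y‖ ^ t * δ ^ t)) :=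
              mul_le_mul_of_nonneg_right (by linarith) (by linarith)
            nlinarith [e2, e3]
    -- combine numerator
    have hnum : ‖-muDotW μ₁ W z₁ - -muDotW μ₂ W z₂‖
        ≤ 4 * M * (1 + (1 + 2*ρ) ^ t) * δ ^ t := by
      have hsplit : -muDotW μ₁ W z₁ - -muDotW μ₂ W z₂
          = -((muDotW μ₁ W z₁ - muDotW μ₂ W z₁) + (muDotW μ₂ W z₁ - muDotW μ₂ W z₂)) := by
        ring
      rw [hsplit, norm_neg]
      have hytP : ‖y‖ ^ t ≤ (1 + 2*ρ) ^ t :=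
        Real.rpow_le_rpow (norm_nonneg _) (by linarith) ht0.le
      calc ‖(muDotW μ₁ W z₁ - muDotW μ₂ W z₁) + (muDotW μ₂ W z₁ - muDotW μ₂ W z₂)‖
          ≤ ‖muDotW μ₁ W z₁ - muDotW μ₂ W z₁‖ + ‖muDotW μ₂ W z₁ - muDotW μ₂ W z₂‖ :=
            norm_add_le _ _
        _ ≤ 4 * M * δ ^ t + 4 * M * (‖y‖ ^ t * δ ^ t) := add_le_add ht1' ht2'
        _ ≤ 4 * M * (1 + (1 + 2*ρ) ^ t) * δ ^ t := combine_ineq hM hδt0 hytP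
    calc ‖-muDotW μ₁ W z₁ - -muDotW μ₂ W z₂‖ / ‖(y.1 : ℂ) + (y.2 : ℂ) * Complex.I‖
        ≤ (4 * M * (1 + (1 + 2*ρ) ^ t) * δ ^ t) / ‖y‖ :=
          div_le_div₀ hKδ0 hnum hypos (den_ge y)
      _ = (4 * M * (1 + (1 + 2*ρ) ^ t) * δ ^ t) * ‖y‖⁻¹ := by rw [div_eq_mul_inv]
      _ ≤ (4 * M * (1 + (1 + 2*ρ) ^ t) * δ ^ t) * phi (2 * ρ) y :=
          mul_le_mul_of_nonneg_left (phi_ge (2*ρ) hy1 hy2 hyR) hKδ0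
  · rw [g_supp hρ hWsupp hμ₁ hx (not_le.mp hyR), g_supp hρ hWsupp hμ₂ hx (not_le.mp hyR)]
    simp only [neg_zero, zero_div, sub_zero, norm_zero]
    exact mul_nonneg hKδ0 (phi_nonneg _ _)

end Blocks

set_option maxHeartbeats 1000000 in
theorem stmt2 (n : ℕ) (hn : 1 ≤ n) (ρ t M : ℝ) (hρ : 0 < ρ) (ht0 : 0 < t) (ht1 : t ≤ 1)
    (hM : 0 < M) :
    ∃ C : ℝ, 0 < C ∧
      ∀ W : Euc n → Euc n,
        (∀ x, ρ < ‖x‖ → W x = 0) →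
        HolderBdd t M W →
        ∀ μ₁ μ₂ : EuclideanSpace ℂ (Fin n), GoodMu μ₁ → GoodMu μ₂ →
          ∀ x : Euc n, ‖x‖ ≤ ρ →
            ‖Nmuinv μ₁ (fun y => -muDotW μ₁ W y) x - Nmuinv μ₂ (fun y => -muDotW μ₂ W y) x‖
              ≤ C * ‖μ₁ - μ₂‖ ^ t := by
    classical
  set K : ℝ := 4 * M * (1 + (1 + 2*ρ) ^ t) with hKdef
  have hPt : (0:ℝ) < (1 + 2*ρ) ^ t := Real.rpow_pos_of_pos (by linarith) t
  have hK0 : 0 < K := by positivity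
  set J : ℝ := ∫ y : ℝ × ℝ, phi (2 * ρ) y with hJdef
  have hJ0 : 0 ≤ J := integral_nonneg (phi_nonneg (2 * ρ))
  have hπ : (0:ℝ) < π := Real.pi_pos
  refine ⟨(1/(2*π)) * K * J + 1, ?_, ?_⟩
  · have h1 : 0 ≤ (1/(2*π)) * K * J :=
      mul_nonneg (mul_nonneg (by positivity) hK0.le) hJ0
    linarith
  intro W hWsupp hHB μ₁ μ₂ hμ₁ hμ₂ x hx
  obtain ⟨a, b, ha0, hb0, haM, hWa, hWb⟩ := hHB
  have hWc : Continuous W := cont_of_holder ht0 hWb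
  set δ : ℝ := ‖μ₁ - μ₂‖ with hδdef
  have hδt0 : 0 ≤ δ ^ t := Real.rpow_nonneg (norm_nonneg _) t
  -- the two integrands
  set g₁ : ℝ × ℝ → ℂ := fun y =>
    -muDotW μ₁ W (x - y.1 • reV μ₁ - y.2 • imV μ₁) / ((y.1 : ℂ) + (y.2 : ℂ) * Complex.I)
    with hg₁
  set g₂ : ℝ × ℝ → ℂ := fun y =>
    -muDotW μ₂ W (x - y.1 • reV μ₂ - y.2 • imV μ₂) / ((y.1 : ℂ) + (y.2 : ℂ) * Complex.I)
    with hg₂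
  have hI1 : Integrable g₁ := g_int hρ hM hWsupp hb0 haM hWa hWc hμ₁ hx
  have hI2 : Integrable g₂ := g_int hρ hM hWsupp hb0 haM hWa hWc hμ₂ hx
  have hfactor :
      Nmuinv μ₁ (fun y => -muDotW μ₁ W y) x - Nmuinv μ₂ (fun y => -muDotW μ₂ W y) x
        = (1 / (2 * (π : ℂ))) * ((∫ y : ℝ × ℝ, g₁ y) - ∫ y : ℝ × ℝ, g₂ y) := by
    rw [mul_sub]
    rfl
  have hkey : ‖(∫ y : ℝ × ℝ, g₁ y) - ∫ y : ℝ × ℝ, g₂ y‖ ≤ (K * δ ^ t) * J := by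
    rw [← integral_sub hI1 hI2]
    refine (norm_integral_le_integral_norm _).trans ?_
    have hle : ∀ᵐ y : ℝ × ℝ, ‖g₁ y - g₂ y‖ ≤ (K * δ ^ t) * phi (2 * ρ) y := by
      filter_upwards [ae_fst_ne, ae_snd_ne] with y hy1 hy2
      have := g_diff_le hρ ht0 ht1 hM hWsupp ha0 hb0 haM hWa hWb hμ₁ hμ₂ hx hy1 hy2
      calc ‖g₁ y - g₂ y‖
          ≤ (4 * M * (1 + (1 + 2*ρ) ^ t) * ‖μ₁ - μ₂‖ ^ t) * phi (2 * ρ) y := this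
        _ = (K * δ ^ t) * phi (2 * ρ) y := by rw [hKdef, hδdef]
    have hmono : (∫ y : ℝ × ℝ, ‖g₁ y - g₂ y‖) ≤ ∫ y : ℝ × ℝ, (K * δ ^ t) * phi (2 * ρ) y :=
      integral_mono_of_nonneg (Filter.Eventually.of_forall fun y => norm_nonneg _)
        ((integrable_phi (2 * ρ) (by positivity)).const_mul _) hle
    refine hmono.trans ?_
    rw [integral_const_mul]
  have hcnorm : ‖(1 / (2 * (π : ℂ)))‖ = 1 / (2 * π) := by
    have h2 : (2 * (π : ℂ)) = ((2 * π : ℝ) : ℂ) := by push_cast; ring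
    rw [norm_div, h2, Complex.norm_real, norm_one, Real.norm_eq_abs,
      abs_of_pos (by positivity)]
  rw [hfactor, norm_mul, hcnorm]
  calc (1 / (2 * π)) * ‖(∫ y : ℝ × ℝ, g₁ y) - ∫ y : ℝ × ℝ, g₂ y‖
      ≤ (1 / (2 * π)) * ((K * δ ^ t) * J) :=
        mul_le_mul_of_nonneg_left hkey (by positivity)
    _ = ((1/(2*π)) * K * J) * δ ^ t := by ring
    _ ≤ ((1/(2*π)) * K * J + 1) * δ ^ t := by
        apply mul_le_mul_of_nonneg_right _ hδt0
        linarith
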